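/- arXiv:1409.8510 — 4 statements merged into one kernel-verified Lean document; each statement's English description precedes it below -/
import Mathlib

section
/- Let f, g₁, g₂ be polynomials with integer coefficients such that f(0) ≠ 0, and suppose f(x)^n = g₁(x^k)/g₂(x^k) as rational functions for some positive integers n and k. Then there exists a polynomial h with integer coefficients such that f(x) = h(x^k). -/
open Polynomial

lemma coeff_comp_C_mul_X {R : Type*} [CommRing R] (p : R[X]) (c : R) (i : ℕ) :
    (p.comp (C c * X)).coeff i = c ^ i * p.coeff i := by
  induction p using Polynomial.induction_on' with
  | add p q hp hq => simp [add_comp, hp, hq, mul_add]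
  | monomial m a =>
    rw [← C_mul_X_pow_eq_monomial, mul_comp, pow_comp, C_comp, X_comp, mul_pow, ← C_pow,
      ← mul_assoc, ← C_mul, coeff_C_mul, coeff_X_pow, coeff_C_mul, coeff_X_pow]
    split_ifs with h
    · subst h; ring
    · ring

theorem stmt_0 (f g₁ g₂ : Polynomial ℤ) (n k : ℕ) (hn : 0 < n) (hk : 0 < k)
    (hf0 : f.eval 0 ≠ 0) (hg₂ : g₂ ≠ 0)
    (heq : f ^ n * g₂.comp (X ^ k) = g₁.comp (X ^ k)) :
    ∃ h : Polynomial ℤ, f = h.comp (X ^ k) := by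
  classical
  set ι := (Int.castRingHom ℂ)
  have hι : Function.Injective ι := fun a b h => Int.cast_injective h
  set F : ℂ[X] := f.map ι with hF
  have hFcoeff : ∀ i, F.coeff i = (f.coeff i : ℂ) := fun i => by simp [hF, ι]
  have hF0 : F.eval 0 ≠ 0 := by
    rw [hF, eval_map, eval₂_at_zero, coeff_zero_eq_eval_zero]
    exact fun h => hf0 (by simpa using h)
  have hFne : F ≠ 0 := fun h => hF0 (by rw [h]; simp)
  obtain ⟨ζ, hζ⟩ : ∃ ζ : ℂ, IsPrimitiveRoot ζ k := ⟨_, Complex.isPrimitiveRoot_exp k hk.ne'⟩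
  have heqC : F ^ n * (g₂.map ι).comp (X ^ k) = (g₁.map ι).comp (X ^ k) := by
    have := congrArg (Polynomial.map ι) heq
    simpa [Polynomial.map_mul, Polynomial.map_pow, Polynomial.map_comp] using this
  set P : ℂ[X] := F.comp (C ζ * X) with hP
  have hcomp : ∀ g : ℂ[X], (g.comp (X ^ k)).comp (C ζ * X) = g.comp (X ^ k) := by
    intro g
    rw [comp_assoc]
    congr 1
    rw [pow_comp, X_comp, mul_pow, ← C_pow, hζ.pow_eq_one, C_1, one_mul]
  have hG₂ : (g₂.map ι).comp (X ^ k) ≠ 0 := by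
    rw [← expand_eq_comp_X_pow, expand_ne_zero hk]
    exact (Polynomial.map_ne_zero_iff hι).2 hg₂
  have hPF : P ^ n = F ^ n := by
    refine mul_right_cancel₀ hG₂ ?_
    have h2 := congrArg (·.comp (C ζ * X)) heqC
    simp only [mul_comp, pow_comp, hcomp] at h2
    rw [← hP] at h2
    exact h2.trans heqC.symm
  -- Step 2 : P = F
  set K := RatFunc ℂ
  set φ := algebraMap ℂ[X] K with hφ
  have hφinj : Function.Injective φ := IsFractionRing.injective ℂ[X] K
  have hφF : φ F ≠ 0 := fun h => hFne (hφinj (by rw [h, map_zero]))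
  set u : K := φ P / φ F with hu
  have hun : u ^ n = 1 := by
    rw [hu, div_pow, ← map_pow, ← map_pow, hPF]
    exact div_self (by rw [map_pow]; exact pow_ne_zero n hφF)
  obtain ⟨ξ, hξ⟩ : ∃ ξ : ℂ, IsPrimitiveRoot ξ n := ⟨_, Complex.isPrimitiveRoot_exp n hn.ne'⟩
  have hprod : ∏ c ∈ nthRootsFinset n (1 : ℂ), (u - algebraMap ℂ K c) = 0 := by
    have h3 := congrArg (fun q => Polynomial.eval u (q.map (algebraMap ℂ K)))
      (X_pow_sub_one_eq_prod hn hξ)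
    simp only [Polynomial.map_sub, Polynomial.map_pow, Polynomial.map_one, map_X,
      Polynomial.map_prod, map_C, eval_sub, eval_pow, eval_X, eval_one, eval_prod,
      eval_C, hun, sub_self] at h3
    exact h3.symm
  obtain ⟨c, -, hc⟩ := Finset.prod_eq_zero_iff.mp hprod
  have hc' : φ P = algebraMap ℂ K c * φ F := by
    have h4 := sub_eq_zero.mp hc
    rw [hu, div_eq_iff hφF] at h4
    exact h4
  have hPc : P = C c * F := by
    apply hφinj
    rw [map_mul, ← Polynomial.algebraMap_eq, ← IsScalarTower.algebraMap_apply ℂ ℂ[X] K]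
    exact hc'
  have hceq : c = 1 := by
    have h5 := congrArg (eval 0) hPc
    simp only [hP, eval_comp, eval_mul, eval_C, eval_X, mul_zero] at h5
    exact mul_right_cancel₀ hF0 (by rw [one_mul, ← h5])
  have hPFeq : P = F := by rw [hPc, hceq, C_1, one_mul]
  -- Step 3 : coefficients vanish off multiples of k
  have hcoef : ∀ i, ¬ k ∣ i → f.coeff i = 0 := by
    intro i hi
    have h6 : ζ ^ i * F.coeff i = F.coeff i := by
      have := congrArg (fun q => Polynomial.coeff q i) hPFeq
      rw [mul_comm]; simpa [hP, coeff_comp_C_mul_X] using this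
    have hz : ζ ^ i ≠ 1 := fun h => hi ((hζ.pow_eq_one_iff_dvd i).mp h)
    have h7 : (ζ ^ i - 1) * F.coeff i = 0 := by linear_combination h6
    rcases mul_eq_zero.mp h7 with h | h
    · exact absurd (sub_eq_zero.mp h) hz
    · have := (hFcoeff i).symm.trans h
      exact_mod_cast this
  refine ⟨contract k f, ?_⟩
  rw [← expand_eq_comp_X_pow]
  ext i
  rw [coeff_expand hk]
  split_ifs with h
  · rw [coeff_contract hk.ne', Nat.div_mul_cancel h]
  · exact hcoef i h
end

section
/- Let α₁,…,α_r and β₁,…,β_s be nonzero complex numbers, and let k be a positive integer such that Σᵢ αᵢ^m = Σⱼ βⱼ^m for every positive integer m not divisible by k. Then, setting L_C(t) = Πᵢ(1 − αᵢt), L_D(t) = Πⱼ(1 − βⱼt), L_C^{(k)}(t) = Πᵢ(1 − αᵢ^k t), L_D^{(k)}(t) = Πⱼ(1 − βⱼ^k t), one has the polynomial identity L_C(t)^k · L_D^{(k)}(t^k) = L_D(t)^k · L_C^{(k)}(t^k). -/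
open Polynomial

noncomputable def lgd (f : PowerSeries ℂ) : PowerSeries ℂ :=
  PowerSeries.derivative ℂ f * f⁻¹

lemma lgd_mul {f g : PowerSeries ℂ} (hf : PowerSeries.constantCoeff f ≠ 0)
    (hg : PowerSeries.constantCoeff g ≠ 0) : lgd (f * g) = lgd f + lgd g := by
  unfold lgd
  rw [Derivation.leibniz, PowerSeries.mul_inv_rev, smul_eq_mul, smul_eq_mul]
  have h1 : f * f⁻¹ = 1 := PowerSeries.mul_inv_cancel f hf
  have h2 : g * g⁻¹ = 1 := PowerSeries.mul_inv_cancel g hg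
  calc (f * PowerSeries.derivative ℂ g + g * PowerSeries.derivative ℂ f) * (g⁻¹ * f⁻¹)
      = PowerSeries.derivative ℂ f * f⁻¹ * (g * g⁻¹)
        + PowerSeries.derivative ℂ g * g⁻¹ * (f * f⁻¹) := by ring
    _ = _ := by rw [h1, h2]; ring

lemma lgd_deriv {f : PowerSeries ℂ} (hf : PowerSeries.constantCoeff f ≠ 0) :
    PowerSeries.derivative ℂ f = lgd f * f := by
  unfold lgd
  rw [mul_assoc, PowerSeries.inv_mul_cancel f hf, mul_one]

lemma lgd_pow {f : PowerSeries ℂ} (hf : PowerSeries.constantCoeff f ≠ 0) (n : ℕ) :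
    lgd (f ^ n) = n • lgd f := by
  induction n with
  | zero => simp [lgd]
  | succ n ih =>
      rw [pow_succ, lgd_mul (by simp [pow_ne_zero, hf]) hf, ih, succ_nsmul]

lemma lgd_prod {ι : Type*} (t : Finset ι) (f : ι → PowerSeries ℂ)
    (h : ∀ i ∈ t, PowerSeries.constantCoeff (f i) ≠ 0) :
    lgd (∏ i ∈ t, f i) = ∑ i ∈ t, lgd (f i) := by
  classical
  induction t using Finset.cons_induction with
  | empty => simp [lgd]
  | cons a t ha ih =>
      rw [Finset.prod_cons, Finset.sum_cons,
        lgd_mul (h a (Finset.mem_cons_self a t)) ?_,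
        ih fun i hi => h i (Finset.mem_cons_of_mem hi)]
      rw [map_prod]
      exact Finset.prod_ne_zero_iff.mpr fun i hi => h i (Finset.mem_cons_of_mem hi)

lemma constCoeff_factor (a : ℂ) (k : ℕ) (hk : 0 < k) :
    PowerSeries.constantCoeff (1 - PowerSeries.C a * PowerSeries.X ^ k) = 1 := by
  simp [zero_pow hk.ne']

lemma constCoeff_factor1 (a : ℂ) :
    PowerSeries.constantCoeff (1 - PowerSeries.C a * PowerSeries.X) = 1 := by
  simpa using constCoeff_factor a 1 one_pos

lemma inv_factor (a : ℂ) (k : ℕ) (hk : 0 < k) :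
    (1 - PowerSeries.C a * PowerSeries.X ^ k)⁻¹
      = PowerSeries.mk (fun n => if k ∣ n then a ^ (n / k) else 0) := by
  symm
  rw [PowerSeries.eq_inv_iff_mul_eq_one]
  · ext n
    rw [mul_sub, mul_one, show PowerSeries.mk (fun n => if k ∣ n then a ^ (n / k) else 0) *
        (PowerSeries.C a * PowerSeries.X ^ k)
        = PowerSeries.mk (fun n => if k ∣ n then a ^ (n / k) else 0) * PowerSeries.C a
          * PowerSeries.X ^ k by ring]
    rw [map_sub, PowerSeries.coeff_mul_X_pow', PowerSeries.coeff_mul_C, PowerSeries.coeff_mk,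
      PowerSeries.coeff_mk, PowerSeries.coeff_one]
    rcases Nat.eq_zero_or_pos n with rfl | hn
    · have h0 : ¬ k ≤ 0 := by omega
      simp [h0]
    · rw [if_neg hn.ne']
      by_cases hd : k ∣ n
      · have hkn := Nat.le_of_dvd hn hd
        obtain ⟨c, rfl⟩ := hd
        rcases c with _ | c
        · simp at hn
        · have e1 : k * (c + 1) - k = k * c := by simp [Nat.mul_succ]
          have e2 : (k * (c + 1)) / k = c + 1 := Nat.mul_div_cancel_left _ hk
          have e3 : (k * c) / k = c := Nat.mul_div_cancel_left _ hk
          rw [if_pos ⟨c + 1, rfl⟩, if_pos hkn, e1, if_pos ⟨c, rfl⟩, e2, e3, pow_succ]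
          ring
      · by_cases hkn : k ≤ n
        · have h2 : ¬ k ∣ n - k :=
            fun hd2 => hd (by rw [← Nat.sub_add_cancel hkn]; exact hd2.add dvd_rfl)
          simp [hd, h2, hkn]
        · simp [hd, hkn]
  · rw [constCoeff_factor a k hk]; exact one_ne_zero

lemma deriv_factor (a : ℂ) (k : ℕ) :
    PowerSeries.derivative ℂ (1 - PowerSeries.C a * PowerSeries.X ^ k)
      = -(PowerSeries.C a * (k • PowerSeries.X ^ (k - 1))) := by
  rw [map_sub, Derivation.map_one_eq_zero, zero_sub, neg_inj, Derivation.leibniz,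
    Derivation.leibniz_pow, PowerSeries.derivative_C, PowerSeries.derivative_X, smul_zero,
    add_zero, smul_eq_mul, smul_eq_mul, mul_one]

lemma lgd_factor (a : ℂ) (k : ℕ) (hk : 0 < k) :
    lgd (1 - PowerSeries.C a * PowerSeries.X ^ k)
      = - PowerSeries.mk (fun n => if k ∣ (n + 1) then (k : ℂ) * a ^ ((n + 1) / k) else 0) := by
  unfold lgd
  rw [inv_factor a k hk, deriv_factor a k]
  ext n
  rw [show -(PowerSeries.C a * (k • PowerSeries.X ^ (k - 1)))
      * PowerSeries.mk (fun n => if k ∣ n then a ^ (n / k) else 0)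
      = -(k • (PowerSeries.C a * (PowerSeries.mk (fun n => if k ∣ n then a ^ (n / k) else 0)
        * PowerSeries.X ^ (k - 1)))) by
    rw [nsmul_eq_mul, nsmul_eq_mul]; ring]
  rw [map_neg, map_neg, map_nsmul, PowerSeries.coeff_C_mul, PowerSeries.coeff_mul_X_pow',
    PowerSeries.coeff_mk, PowerSeries.coeff_mk, nsmul_eq_mul]
  by_cases hd : k ∣ n + 1
  · obtain ⟨c, hc⟩ := hd
    rcases c with _ | c
    · omega
    · have hmul : k * (c + 1) = k * c + k := by simp [Nat.mul_succ]
      have hkn : k - 1 ≤ n := by omega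
      have e1 : n - (k - 1) = k * c := by omega
      have e3 : (k * c) / k = c := Nat.mul_div_cancel_left _ hk
      have e2 : (n + 1) / k = c + 1 := by rw [hc]; exact Nat.mul_div_cancel_left _ hk
      rw [if_pos hkn, e1, if_pos ⟨c, rfl⟩, if_pos ⟨c + 1, hc⟩, e3, e2, pow_succ]
      ring
  · rw [if_neg hd]
    by_cases hkn : k - 1 ≤ n
    · rw [if_pos hkn, if_neg, mul_zero, mul_zero]
      · intro hd2
        apply hd
        have h5 : n - (k - 1) + k = n + 1 := by omega
        rw [← h5]; exact hd2.add dvd_rfl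
    · rw [if_neg hkn, mul_zero, mul_zero]

lemma lgd_factor_one (a : ℂ) :
    lgd (1 - PowerSeries.C a * PowerSeries.X)
      = - PowerSeries.mk (fun n => a ^ (n + 1)) := by
  have h := lgd_factor a 1 one_pos
  rw [pow_one] at h
  rw [h]
  congr 1
  ext n
  simp

theorem stmt_4 (r s : ℕ) (α : Fin r → ℂ) (β : Fin s → ℂ)
    (hα : ∀ i, α i ≠ 0) (hβ : ∀ j, β j ≠ 0) (k : ℕ) (hk : 0 < k)
    (hsum : ∀ m : ℕ, 0 < m → ¬ k ∣ m → ∑ i, α i ^ m = ∑ j, β j ^ m) :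
    (∏ i, (1 - C (α i) * X)) ^ k * ∏ j, (1 - C (β j ^ k) * X ^ k) =
      (∏ j, (1 - C (β j) * X)) ^ k * ∏ i, (1 - C (α i ^ k) * X ^ k) := by
  rw [← Polynomial.coe_inj]
  have cprod : ∀ {ι : Type} (t : Finset ι) (f : ι → ℂ[X]),
      ((∏ i ∈ t, f i : ℂ[X]) : PowerSeries ℂ) = ∏ i ∈ t, ((f i : ℂ[X]) : PowerSeries ℂ) := by
    intro ι t f
    rw [← Polynomial.coeToPowerSeries.ringHom_apply, map_prod]
    simp [Polynomial.coeToPowerSeries.ringHom_apply]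
  simp only [Polynomial.coe_mul, Polynomial.coe_pow, cprod, Polynomial.coe_sub,
    Polynomial.coe_one, Polynomial.coe_C, Polynomial.coe_X]
  set F : PowerSeries ℂ := (∏ i, (1 - PowerSeries.C (α i) * PowerSeries.X)) ^ k
    * ∏ j, (1 - PowerSeries.C (β j ^ k) * PowerSeries.X ^ k) with hFdef
  set G : PowerSeries ℂ := (∏ j, (1 - PowerSeries.C (β j) * PowerSeries.X)) ^ k
    * ∏ i, (1 - PowerSeries.C (α i ^ k) * PowerSeries.X ^ k) with hGdef
  -- constant coefficients
  have hcF : PowerSeries.constantCoeff F = 1 := by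
    rw [hFdef]
    simp [map_prod, constCoeff_factor1, constCoeff_factor1, zero_pow hk.ne']
  have hcG : PowerSeries.constantCoeff G = 1 := by
    rw [hGdef]
    simp [map_prod, constCoeff_factor1, constCoeff_factor1, zero_pow hk.ne']
  have hFne : PowerSeries.constantCoeff F ≠ 0 := by rw [hcF]; exact one_ne_zero
  have hGne : PowerSeries.constantCoeff G ≠ 0 := by rw [hcG]; exact one_ne_zero
  -- log derivatives agree
  have hAne : PowerSeries.constantCoeff (∏ i, (1 - PowerSeries.C (α i) * PowerSeries.X)) ≠ 0 := by
    simp [map_prod, constCoeff_factor1]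
  have hBne : PowerSeries.constantCoeff (∏ j, (1 - PowerSeries.C (β j) * PowerSeries.X)) ≠ 0 := by
    simp [map_prod, constCoeff_factor1]
  have hlgd : lgd F = lgd G := by
    rw [hFdef, hGdef,
      lgd_mul (by simpa using pow_ne_zero k hAne)
        (by simp [map_prod, constCoeff_factor1, zero_pow hk.ne']),
      lgd_mul (by simpa using pow_ne_zero k hBne)
        (by simp [map_prod, constCoeff_factor1, zero_pow hk.ne']),
      lgd_pow hAne, lgd_pow hBne,
      lgd_prod _ _ (fun i _ => by rw [constCoeff_factor1]; exact one_ne_zero),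
      lgd_prod _ _ (fun i _ => by rw [constCoeff_factor _ k hk]; exact one_ne_zero),
      lgd_prod _ _ (fun i _ => by rw [constCoeff_factor1]; exact one_ne_zero),
      lgd_prod _ _ (fun i _ => by rw [constCoeff_factor _ k hk]; exact one_ne_zero)]
    simp only [lgd_factor_one, lgd_factor _ k hk]
    ext n
    rw [map_add, map_add, map_nsmul, map_nsmul]
    simp only [map_sum, map_neg, PowerSeries.coeff_mk, nsmul_eq_mul]
    by_cases hd : k ∣ n + 1
    · have hpow : ∀ x : ℂ, (x ^ k) ^ ((n + 1) / k) = x ^ (n + 1) := fun x => by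
        rw [← pow_mul, Nat.mul_div_cancel' hd]
      simp only [if_pos hd, hpow, Finset.sum_neg_distrib, Finset.mul_sum, ← Finset.sum_neg_distrib]
      simp only [Finset.sum_neg_distrib, ← Finset.mul_sum]
      ring
    · simp only [if_neg hd, neg_zero, Finset.sum_const_zero, add_zero, Finset.sum_neg_distrib]
      rw [hsum (n + 1) n.succ_pos hd]
  -- conclude F = G
  have hFG : F * G⁻¹ = 1 := by
    apply PowerSeries.derivative.ext
    · rw [Derivation.leibniz, PowerSeries.derivative_inv', smul_eq_mul, smul_eq_mul,
        lgd_deriv hFne, lgd_deriv hGne, hlgd, Derivation.map_one_eq_zero]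
      have hGG : G * G⁻¹ = 1 := PowerSeries.mul_inv_cancel G hGne
      calc F * (-G⁻¹ ^ 2 * (lgd G * G)) + G⁻¹ * (lgd G * F)
          = lgd G * F * G⁻¹ * (1 - G * G⁻¹) := by ring
        _ = 0 := by rw [hGG]; ring
    · rw [map_mul, hcF, PowerSeries.constantCoeff_inv, hcG, map_one]
      norm_num
  calc F = F * (G⁻¹ * G) := by rw [PowerSeries.inv_mul_cancel G hGne, mul_one]
    _ = F * G⁻¹ * G := by ring
    _ = G := by rw [hFG, one_mul]
end

section
/- Let P, Q ∈ ℤ[t] be polynomials with P(0) = Q(0) = 1, and suppose Q(t) = q(t^k) · P(t) for some polynomial q ∈ ℤ[t] and integer k > 1. Then for every positive integer m not divisible by k, the power sums agree: if P(t) = Πᵢ(1 − αᵢt) and Q(t) = Πⱼ(1 − βⱼt) over ℂ, then Σⱼ βⱼ^m = Σᵢ αᵢ^m. -/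
open Polynomial

namespace Stmt6Aux

open scoped PowerSeries

noncomputable def ld (f : ℂ⟦X⟧) : ℂ⟦X⟧ := f⁻¹ * PowerSeries.derivativeFun f

lemma ld_mul (f g : ℂ⟦X⟧) (hf : PowerSeries.constantCoeff f ≠ 0)
    (hg : PowerSeries.constantCoeff g ≠ 0) :
    ld (f * g) = ld f + ld g := by
  unfold ld
  rw [PowerSeries.derivativeFun_mul, PowerSeries.mul_inv_rev, smul_eq_mul, smul_eq_mul]
  have h1 : f⁻¹ * f = 1 := PowerSeries.inv_mul_cancel f hf
  have h2 : g⁻¹ * g = 1 := PowerSeries.inv_mul_cancel g hg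
  calc g⁻¹ * f⁻¹ * (f * PowerSeries.derivativeFun g + g * PowerSeries.derivativeFun f)
      = (f⁻¹ * f) * (g⁻¹ * PowerSeries.derivativeFun g)
        + (g⁻¹ * g) * (f⁻¹ * PowerSeries.derivativeFun f) := by ring
    _ = _ := by rw [h1, h2, one_mul, one_mul, add_comm]

noncomputable def fac (a : ℂ) : ℂ⟦X⟧ := 1 - PowerSeries.C a * PowerSeries.X

lemma constantCoeff_fac (a : ℂ) : PowerSeries.constantCoeff (fac a) = 1 := by
  simp [fac]

lemma ld_prod {n : ℕ} (γ : Fin n → ℂ) :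
    ld (∏ i, fac (γ i)) = ∑ i, ld (fac (γ i)) := by
  classical
  induction n with
  | zero => simp [ld, Fin.prod_univ_zero, PowerSeries.derivativeFun_one]
  | succ n ih =>
      rw [Fin.prod_univ_succ, Fin.sum_univ_succ, ld_mul, ih fun i => γ i.succ]
      · simp [constantCoeff_fac]
      · rw [map_prod]
        simp [constantCoeff_fac]

lemma fac_inv (a : ℂ) : (fac a)⁻¹ = PowerSeries.mk fun n => a ^ n := by
  rw [eq_comm, PowerSeries.eq_inv_iff_mul_eq_one (by simp [constantCoeff_fac])]
  ext n
  rw [fac]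
  cases n with
  | zero => simp
  | succ n =>
      rw [mul_sub, mul_one, map_sub]
      rw [show PowerSeries.mk (fun n => a ^ n) * (PowerSeries.C a * PowerSeries.X)
        = PowerSeries.C a * (PowerSeries.X * PowerSeries.mk fun n => a ^ n) by ring]
      simp [PowerSeries.coeff_succ_X_mul, pow_succ, mul_comm]

lemma deriv_fac (a : ℂ) : PowerSeries.derivativeFun (fac a) = PowerSeries.C (-a) := by
  ext n
  erw [PowerSeries.coeff_derivative]
  rw [fac, map_sub]
  cases n with
  | zero => simp
  | succ n => simp [PowerSeries.coeff_C_mul, PowerSeries.coeff_X, PowerSeries.coeff_one]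

lemma coeff_ld_fac (a : ℂ) (m : ℕ) (hm : 0 < m) :
    PowerSeries.coeff (m - 1) (ld (fac a)) = -a ^ m := by
  rw [ld, fac_inv, deriv_fac, mul_comm, PowerSeries.coeff_C_mul, PowerSeries.coeff_mk]
  obtain ⟨n, rfl⟩ := Nat.exists_eq_succ_of_ne_zero hm.ne'
  simp only [Nat.succ_sub_one]
  rw [pow_succ]
  ring

lemma inv_supp (k : ℕ) (g : ℂ⟦X⟧) (hg : ∀ n, ¬ k ∣ n → PowerSeries.coeff n g = 0) :
    ∀ n, ¬ k ∣ n → PowerSeries.coeff n g⁻¹ = 0 := by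
  intro n
  induction n using Nat.strong_induction_on with
  | _ n ih =>
    intro hn
    have hn0 : n ≠ 0 := by rintro rfl; exact hn (dvd_zero k)
    rw [PowerSeries.coeff_inv, if_neg hn0]
    rw [Finset.sum_eq_zero, mul_zero]
    intro x hx
    rw [Finset.HasAntidiagonal.mem_antidiagonal] at hx
    by_cases hlt : x.2 < n
    · rw [if_pos hlt]
      by_cases h1 : k ∣ x.1
      · have h2 : ¬ k ∣ x.2 := fun h => hn (hx ▸ dvd_add h1 h)
        rw [ih x.2 hlt h2, mul_zero]
      · rw [hg x.1 h1, zero_mul]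
    · rw [if_neg hlt]

lemma ld_supp (k : ℕ) (g : ℂ⟦X⟧) (hg : ∀ n, ¬ k ∣ n → PowerSeries.coeff n g = 0) :
    ∀ m, 0 < m → ¬ k ∣ m → PowerSeries.coeff (m - 1) (ld g) = 0 := by
  intro m hm hkm
  rw [ld, PowerSeries.coeff_mul]
  apply Finset.sum_eq_zero
  intro x hx
  rw [Finset.HasAntidiagonal.mem_antidiagonal] at hx
  by_cases h1 : k ∣ x.1
  · have h2 : ¬ k ∣ (x.2 + 1) := by
      intro h
      apply hkm
      have : x.1 + (x.2 + 1) = m := by omega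
      exact this ▸ dvd_add h1 h
    erw [PowerSeries.coeff_derivative]
    rw [hg (x.2 + 1) h2, zero_mul, mul_zero]
  · rw [inv_supp k g hg x.1 h1, zero_mul]

lemma coe_prod_fac {n : ℕ} (γ : Fin n → ℂ) :
    (((∏ i, (1 - Polynomial.C (γ i) * Polynomial.X) : Polynomial ℂ)) : ℂ⟦X⟧)
      = ∏ i, fac (γ i) := by
  rw [← Polynomial.coeToPowerSeries.ringHom_apply, map_prod]
  apply Finset.prod_congr rfl
  intro i _
  rw [Polynomial.coeToPowerSeries.ringHom_apply, Polynomial.coe_sub, Polynomial.coe_mul,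
    Polynomial.coe_one, Polynomial.coe_C, Polynomial.coe_X, fac]

end Stmt6Aux

theorem stmt_6 (P Q q : Polynomial ℤ) (k : ℕ) (hk : 1 < k)
    (hP0 : P.coeff 0 = 1) (hQ0 : Q.coeff 0 = 1)
    (hfac : Q = q.comp (X ^ k) * P)
    (r s : ℕ) (α : Fin r → ℂ) (β : Fin s → ℂ)
    (hPα : P.map (Int.castRingHom ℂ) = ∏ i, (1 - C (α i) * X))
    (hQβ : Q.map (Int.castRingHom ℂ) = ∏ j, (1 - C (β j) * X)) :
    ∀ m : ℕ, 0 < m → ¬ k ∣ m → ∑ j, β j ^ m = ∑ i, α i ^ m := by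
  classical
  intro m hm hkm
  set f := Int.castRingHom ℂ
  set g : PowerSeries ℂ := (((q.comp (X ^ k)).map f : Polynomial ℂ) : PowerSeries ℂ) with hgdef
  have hk0 : 0 < k := by omega
  -- support of g
  have hgsupp : ∀ n, ¬ k ∣ n → PowerSeries.coeff n g = 0 := by
    intro n hn
    rw [hgdef, Polynomial.coeff_coe, Polynomial.coeff_map,
      ← Polynomial.expand_eq_comp_X_pow, Polynomial.coeff_expand hk0, if_neg hn, map_zero]
  -- constant coefficient of g
  have hq0 : (q.comp (X ^ k)).coeff 0 = 1 := by
    have := congrArg (fun p => Polynomial.coeff p 0) hfac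
    simp only [Polynomial.mul_coeff_zero, hP0, mul_one, hQ0] at this
    exact this.symm
  have hg0 : PowerSeries.constantCoeff g ≠ 0 := by
    rw [hgdef, ← PowerSeries.coeff_zero_eq_constantCoeff_apply, Polynomial.coeff_coe,
      Polynomial.coeff_map, hq0]
    simp
  have hP1 : PowerSeries.constantCoeff (∏ i, Stmt6Aux.fac (α i)) ≠ 0 := by
    rw [map_prod]
    simp [Stmt6Aux.constantCoeff_fac]
  -- the factorization over power series
  have hQPS : (∏ j, Stmt6Aux.fac (β j)) = g * ∏ i, Stmt6Aux.fac (α i) := by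
    rw [← Stmt6Aux.coe_prod_fac, ← Stmt6Aux.coe_prod_fac, ← hPα, ← hQβ, hgdef,
      ← Polynomial.coe_mul, ← Polynomial.map_mul, ← hfac]
  have hld := congrArg (PowerSeries.coeff (m - 1))
    (by rw [hQPS, Stmt6Aux.ld_mul g _ hg0 hP1] :
      Stmt6Aux.ld (∏ j, Stmt6Aux.fac (β j)) = Stmt6Aux.ld g + Stmt6Aux.ld (∏ i, Stmt6Aux.fac (α i)))
  rw [Stmt6Aux.ld_prod, Stmt6Aux.ld_prod, map_add, map_sum, map_sum,
    Stmt6Aux.ld_supp k g hgsupp m hm hkm, zero_add] at hld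
  simp only [Stmt6Aux.coeff_ld_fac _ m hm] at hld
  rw [← neg_inj]
  simpa using hld
end

section
/- Let ζ_k be a primitive k-th root of unity and let f₁, f₂ ∈ ℂ[x] be coprime polynomials with f₁(0) ≠ 0, f₂(0) ≠ 0, satisfying f₁(x)·f₂(ζ_k x) = f₂(x)·f₁(ζ_k x). Then there exist polynomials h₁, h₂ ∈ ℂ[x] with f₁(x) = h₁(x^k) and f₂(x) = h₂(x^k). -/
open Polynomial

lemma coeff_comp_C_mul_X_s16 (f : Polynomial ℂ) (a : ℂ) (n : ℕ) :
    (f.comp (C a * X)).coeff n = a ^ n * f.coeff n := by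
  induction f using Polynomial.induction_on' with
  | add p q hp hq => simp [add_comp, hp, hq, mul_add]
  | monomial m b =>
      rw [monomial_comp]
      rw [mul_pow, ← C_pow, ← mul_assoc, ← C_mul, coeff_C_mul, coeff_X_pow, coeff_monomial]
      rcases eq_or_ne n m with rfl | h
      · simp [mul_comm]
      · simp [h, Ne.symm h]

lemma comp_eq_self (k : ℕ) (hk : 0 < k) (ζ : ℂ) (hζ : IsPrimitiveRoot ζ k)
    (f : Polynomial ℂ) (hf0 : f.eval 0 ≠ 0) (hdvd : f ∣ f.comp (C ζ * X)) :
    f.comp (C ζ * X) = f := by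
  have hζ0 : ζ ≠ 0 := hζ.ne_zero hk.ne'
  have hf : f ≠ 0 := fun h => hf0 (by simp [h])
  obtain ⟨q, hq⟩ := hdvd
  have hq0 : q ≠ 0 := by
    rintro rfl
    rw [mul_zero] at hq
    apply hf0
    have := congrArg (eval 0) hq
    simpa [eval_comp] using this
  have hdeg : f.natDegree = f.natDegree + q.natDegree := by
    have h1 : (f.comp (C ζ * X)).natDegree = f.natDegree := by
      rw [natDegree_comp, natDegree_C_mul_X ζ hζ0, mul_one]
    rw [hq, natDegree_mul hf hq0] at h1
    omega
  have hqdeg : q.natDegree = 0 := by omega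
  obtain ⟨c, rfl⟩ := natDegree_eq_zero.mp hqdeg
  have hc : c = 1 := by
    have := congrArg (eval 0) hq
    simp [eval_comp] at this
    field_simp at this
    exact this.symm
  rw [hq, hc, map_one, mul_one]

lemma exists_comp_pow (k : ℕ) (hk : 0 < k) (ζ : ℂ) (hζ : IsPrimitiveRoot ζ k)
    (f : Polynomial ℂ) (hf0 : f.eval 0 ≠ 0) (hdvd : f ∣ f.comp (C ζ * X)) :
    ∃ h : Polynomial ℂ, f = h.comp (X ^ k) := by
  have hcomp := comp_eq_self k hk ζ hζ f hf0 hdvd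
  have hvanish : ∀ n, ¬ k ∣ n → f.coeff n = 0 := by
    intro n hn
    have h1 : ζ ^ n * f.coeff n = f.coeff n := by
      conv_rhs => rw [← hcomp]
      rw [coeff_comp_C_mul_X_s16]
    have hζn : ζ ^ n ≠ 1 := fun h => hn ((hζ.pow_eq_one_iff_dvd n).mp h)
    by_contra hne
    exact hζn (mul_right_cancel₀ hne (by rw [h1, one_mul]))
  refine ⟨contract k f, ?_⟩
  rw [← expand_eq_comp_X_pow]
  ext n
  rw [coeff_expand hk, coeff_contract hk.ne']
  split_ifs with h
  · rw [Nat.div_mul_cancel h]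
  · exact hvanish n h

theorem stmt_16 (k : ℕ) (hk : 0 < k) (ζ : ℂ) (hζ : IsPrimitiveRoot ζ k)
    (f₁ f₂ : Polynomial ℂ) (hcop : IsCoprime f₁ f₂)
    (hf₁0 : f₁.eval 0 ≠ 0) (hf₂0 : f₂.eval 0 ≠ 0)
    (heq : f₁ * f₂.comp (C ζ * X) = f₂ * f₁.comp (C ζ * X)) :
    ∃ h₁ h₂ : Polynomial ℂ, f₁ = h₁.comp (X ^ k) ∧ f₂ = h₂.comp (X ^ k) := by
  have hdvd₁ : f₁ ∣ f₁.comp (C ζ * X) :=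
    hcop.dvd_of_dvd_mul_left ⟨f₂.comp (C ζ * X), heq.symm⟩
  have hdvd₂ : f₂ ∣ f₂.comp (C ζ * X) :=
    hcop.symm.dvd_of_dvd_mul_left ⟨f₁.comp (C ζ * X), heq⟩
  obtain ⟨h₁, hh₁⟩ := exists_comp_pow k hk ζ hζ f₁ hf₁0 hdvd₁
  obtain ⟨h₂, hh₂⟩ := exists_comp_pow k hk ζ hζ f₂ hf₂0 hdvd₂
  exact ⟨h₁, h₂, hh₁, hh₂⟩
end
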